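/- arXiv:1607.05100 — 2 statements merged into one kernel-verified Lean document; each statement's English description precedes it below -/
import Mathlib

section
/- Let f ∈ L¹(ℝ²,ℍ) and ε > 0. Then for every (x₁,x₂) ∈ ℝ², (f ∗ p_ε)(x₁,x₂) = (1/(2π)) ∫_{ℝ²} P(εω₁, εω₂) (ℱ_r f)(ω₁,ω₂) e^{j ω₂ x₂} e^{i ω₁ x₁} dω₁ dω₂. -/
open MeasureTheory Real ENNReal

noncomputable section

/-- The real quaternions. -/
abbrev Hq := Quaternion ℝ

/-- The imaginary unit `i`. -/
def qi : Hq := ⟨0,1,0,0⟩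
/-- The imaginary unit `j`. -/
def qj : Hq := ⟨0,0,1,0⟩
/-- The imaginary unit `k`. -/
def qk : Hq := ⟨0,0,0,1⟩

/-- For a (unit pure imaginary) quaternion `u`, `e^{uθ} := cos θ + u sin θ`. -/
def qexp (u : Hq) (θ : ℝ) : Hq := (Real.cos θ) • (1 : Hq) + (Real.sin θ) • u

/-- The right-sided quaternion Fourier transform of `f ∈ L¹(ℝ²,ℍ)`. -/
def Fr (f : ℝ × ℝ → Hq) (ω : ℝ × ℝ) : Hq :=
  (1 / (2 * Real.pi)) • ∫ x : ℝ × ℝ, f x * qexp qi (-(ω.1 * x.1)) * qexp qj (-(ω.2 * x.2))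

/-- The two-sided quaternion Fourier transform of `f ∈ L¹(ℝ²,ℍ)`. -/
def Fs (f : ℝ × ℝ → Hq) (ω : ℝ × ℝ) : Hq :=
  (1 / (2 * Real.pi)) • ∫ x : ℝ × ℝ, qexp qi (-(ω.1 * x.1)) * f x * qexp qj (-(ω.2 * x.2))


/-- The 2D Poisson kernel. -/
def poisson (eps : ℝ) (x : ℝ × ℝ) : ℝ :=
  (1 / Real.pi ^ 2) * (eps ^ 2 / ((eps ^ 2 + x.1 ^ 2) * (eps ^ 2 + x.2 ^ 2)))

/-- The kernel P, with P (a, b) = exp (-|a| - |b|). -/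
def Pker (a b : ℝ) : ℝ := Real.exp (-|a| - |b|)

open Set Filter

section helpers

lemma qi_mul_qi : qi * qi = -1 := by
  ext <;> simp [show qi.re = 0 from rfl, show qi.imI = 1 from rfl, show qi.imJ = 0 from rfl, show qi.imK = 0 from rfl, show (1:Hq).re = 1 from rfl, show (1:Hq).imI = 0 from rfl, show (1:Hq).imJ = 0 from rfl, show (1:Hq).imK = 0 from rfl]

lemma qj_mul_qj : qj * qj = -1 := by
  ext <;> simp [show qj.re = 0 from rfl, show qj.imI = 0 from rfl, show qj.imJ = 1 from rfl, show qj.imK = 0 from rfl, show (1:Hq).re = 1 from rfl, show (1:Hq).imI = 0 from rfl, show (1:Hq).imJ = 0 from rfl, show (1:Hq).imK = 0 from rfl]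

lemma qexp_mul (u : Hq) (hu : u * u = -1) (a b : ℝ) :
    qexp u a * qexp u b = qexp u (a + b) := by
  simp only [qexp, add_mul, mul_add, smul_mul_smul_comm, one_mul, mul_one, hu,
    Real.cos_add, Real.sin_add, smul_neg, smul_smul]
  ext <;> simp <;> ring

lemma norm_qexp_qi (θ : ℝ) : ‖qexp qi θ‖ = 1 := by
  have h : Quaternion.normSq (qexp qi θ) = 1 := by
    simp [qexp, Quaternion.normSq_def', show qi.re = 0 from rfl, show qi.imI = 1 from rfl, show qi.imJ = 0 from rfl, show qi.imK = 0 from rfl, show (1:Hq).re = 1 from rfl, show (1:Hq).imI = 0 from rfl, show (1:Hq).imJ = 0 from rfl, show (1:Hq).imK = 0 from rfl]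
  have := Quaternion.normSq_eq_norm_mul_self (qexp qi θ)
  nlinarith [norm_nonneg (qexp qi θ)]

lemma norm_qexp_qj (θ : ℝ) : ‖qexp qj θ‖ = 1 := by
  have h : Quaternion.normSq (qexp qj θ) = 1 := by
    simp [qexp, Quaternion.normSq_def', show qj.re = 0 from rfl, show qj.imI = 0 from rfl, show qj.imJ = 1 from rfl, show qj.imK = 0 from rfl, show (1:Hq).re = 1 from rfl, show (1:Hq).imI = 0 from rfl, show (1:Hq).imJ = 0 from rfl, show (1:Hq).imK = 0 from rfl]
  have := Quaternion.normSq_eq_norm_mul_self (qexp qj θ)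
  nlinarith [norm_nonneg (qexp qj θ)]

@[fun_prop]
lemma continuous_qexp (u : Hq) : Continuous (qexp u) := by
  unfold qexp; fun_prop

variable {eps t : ℝ}

lemma int_Ioi_exp_cos (heps : 0 < eps) (t : ℝ) :
    ∫ ω in Ioi (0:ℝ), Real.exp (-(eps * ω)) * Real.cos (ω * t)
      = eps / (eps ^ 2 + t ^ 2) := by
  set D := eps ^ 2 + t ^ 2 with hD
  have hD0 : 0 < D := by positivity
  set F : ℝ → ℝ := fun ω => Real.exp (-(eps * ω)) * (t * Real.sin (ω * t) - eps * Real.cos (ω * t)) / D with hF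
  have hderiv : ∀ ω : ℝ, HasDerivAt F (Real.exp (-(eps * ω)) * Real.cos (ω * t)) ω := by
    intro ω
    have h1 : HasDerivAt (fun ω : ℝ => Real.exp (-(eps * ω))) (Real.exp (-(eps * ω)) * (-eps)) ω := by
      have : HasDerivAt (fun ω : ℝ => -(eps * ω)) (-eps) ω := by
        exact ((hasDerivAt_id ω).const_mul eps).neg.congr_deriv (by ring)
      exact this.exp
    have hs : HasDerivAt (fun ω : ℝ => Real.sin (ω * t)) (Real.cos (ω * t) * t) ω :=
      (hasDerivAt_mul_const t).sin
    have hc : HasDerivAt (fun ω : ℝ => Real.cos (ω * t)) (-Real.sin (ω * t) * t) ω :=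
      (hasDerivAt_mul_const t).cos
    have h2 : HasDerivAt (fun ω : ℝ => t * Real.sin (ω * t) - eps * Real.cos (ω * t))
        (t * (Real.cos (ω * t) * t) - eps * (-Real.sin (ω * t) * t)) ω :=
      (hs.const_mul t).sub (hc.const_mul eps)
    have := (h1.mul h2).div_const D
    refine this.congr_deriv ?_
    field_simp
    rw [hD]
    ring
  have hint : IntegrableOn (fun ω => Real.exp (-(eps * ω)) * Real.cos (ω * t)) (Ioi (0:ℝ)) := by
    refine (exp_neg_integrableOn_Ioi 0 heps).mono' ?_ ?_
    · apply Continuous.aestronglyMeasurable; fun_prop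
    · filter_upwards with ω
      rw [Real.norm_eq_abs, abs_mul, Real.abs_exp, neg_mul_eq_neg_mul]
      calc Real.exp (-eps * ω) * |Real.cos (ω * t)| ≤ Real.exp (-eps * ω) * 1 := by
            gcongr; exact Real.abs_cos_le_one _
        _ = Real.exp (-eps * ω) := mul_one _
  have htend : Tendsto F atTop (nhds 0) := by
    apply squeeze_zero_norm (a := fun ω => Real.exp (-(eps * ω)) * ((|t| + eps) / D))
    · intro ω
      show |Real.exp (-(eps * ω)) * (t * Real.sin (ω * t) - eps * Real.cos (ω * t)) / D| ≤ _
      rw [abs_div, abs_mul, Real.abs_exp, abs_of_pos hD0, div_le_iff₀ hD0, mul_assoc,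
        div_mul_cancel₀ _ hD0.ne']
      gcongr
      calc |t * Real.sin (ω * t) - eps * Real.cos (ω * t)|
          ≤ |t * Real.sin (ω * t)| + |eps * Real.cos (ω * t)| := abs_sub _ _
        _ ≤ |t| * 1 + |eps| * 1 := by
            rw [abs_mul, abs_mul]
            gcongr
            · exact Real.abs_sin_le_one _
            · exact Real.abs_cos_le_one _
        _ = |t| + eps := by rw [mul_one, mul_one, abs_of_pos heps]
    · have h0 : Tendsto (fun ω : ℝ => Real.exp (-(eps * ω))) atTop (nhds 0) := by
        apply Real.tendsto_exp_atBot.comp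
        exact tendsto_neg_atBot_iff.mpr ((tendsto_const_mul_atTop_of_pos heps).mpr tendsto_id)
      simpa using h0.mul_const ((|t| + eps) / D)
  have := integral_Ioi_of_hasDerivAt_of_tendsto' (fun x _ => hderiv x) hint htend
  rw [this]
  simp [hF]
  field_simp

lemma integrable_E (heps : 0 < eps) :
    Integrable (fun ω : ℝ => Real.exp (-(eps * |ω|))) := by
  have hIoi : IntegrableOn (fun ω : ℝ => Real.exp (-(eps * |ω|))) (Ioi 0) := by
    refine ((exp_neg_integrableOn_Ioi 0 heps)).congr_fun (fun ω hω => ?_) measurableSet_Ioi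
    rw [abs_of_pos hω]; simp only [neg_mul]
  have hIic : IntegrableOn (fun ω : ℝ => Real.exp (-(eps * |ω|))) (Iic 0) := by
    rw [← Measure.map_neg_eq_self (volume : Measure ℝ)]
    have m : MeasurableEmbedding fun x : ℝ => -x := (Homeomorph.neg ℝ).measurableEmbedding
    rw [m.integrableOn_map_iff]
    simp_rw [Function.comp_def, abs_neg, neg_preimage, neg_Iic, neg_zero]
    exact Iff.mpr integrableOn_Ici_iff_integrableOn_Ioi hIoi
  have := hIic.union hIoi
  rwa [Iic_union_Ioi, integrableOn_univ] at this

lemma integrable_E_cos (heps : 0 < eps) (t : ℝ) :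
    Integrable (fun ω : ℝ => Real.exp (-(eps * |ω|)) * Real.cos (ω * t)) := by
  refine (integrable_E heps).mono' (by apply Continuous.aestronglyMeasurable; fun_prop) ?_
  filter_upwards with ω
  rw [Real.norm_eq_abs, abs_mul, Real.abs_exp]
  calc Real.exp (-(eps * |ω|)) * |Real.cos (ω * t)| ≤ Real.exp (-(eps * |ω|)) * 1 := by
        gcongr; exact Real.abs_cos_le_one _
    _ = _ := mul_one _

lemma integrable_E_sin (heps : 0 < eps) (t : ℝ) :
    Integrable (fun ω : ℝ => Real.exp (-(eps * |ω|)) * Real.sin (ω * t)) := by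
  refine (integrable_E heps).mono' (by apply Continuous.aestronglyMeasurable; fun_prop) ?_
  filter_upwards with ω
  rw [Real.norm_eq_abs, abs_mul, Real.abs_exp]
  calc Real.exp (-(eps * |ω|)) * |Real.sin (ω * t)| ≤ Real.exp (-(eps * |ω|)) * 1 := by
        gcongr; exact Real.abs_sin_le_one _
    _ = _ := mul_one _

lemma int_E_cos (heps : 0 < eps) (t : ℝ) :
    ∫ ω : ℝ, Real.exp (-(eps * |ω|)) * Real.cos (ω * t)
      = 2 * eps / (eps ^ 2 + t ^ 2) := by
  have h : ∀ ω : ℝ, Real.exp (-(eps * |ω|)) * Real.cos (ω * t)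
      = (fun r => Real.exp (-(eps * r)) * Real.cos (r * t)) |ω| := by
    intro ω
    rcases abs_choice ω with h | h <;> rw [h]
    simp only [neg_mul, Real.cos_neg, mul_neg]
  simp_rw [h]
  rw [integral_comp_abs (f := fun r => Real.exp (-(eps * r)) * Real.cos (r * t)),
    int_Ioi_exp_cos heps t]
  ring

lemma int_E_sin (heps : 0 < eps) (t : ℝ) :
    ∫ ω : ℝ, Real.exp (-(eps * |ω|)) * Real.sin (ω * t) = 0 := by
  have h : ∀ ω : ℝ, Real.exp (-(eps * |(-ω)|)) * Real.sin ((-ω) * t)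
      = -(Real.exp (-(eps * |ω|)) * Real.sin (ω * t)) := by
    intro ω; rw [abs_neg, neg_mul, Real.sin_neg]; ring
  have h2 := (integral_neg_eq_self (fun ω : ℝ => Real.exp (-(eps * |ω|)) * Real.sin (ω * t)) volume).symm
  simp_rw [h] at h2
  rw [integral_neg] at h2
  linarith

/-- Pulling a constant quaternion out of an integral on the right. -/
lemma integral_mul_right_Hq {α : Type*} [MeasurableSpace α] {μ : Measure α}
    {f : α → Hq} (hf : Integrable f μ) (c : Hq) :
    ∫ a, f a * c ∂μ = (∫ a, f a ∂μ) * c :=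
  by simpa using (((ContinuousLinearMap.mul ℝ Hq).flip c).integral_comp_comm hf)

/-- Pulling a constant quaternion out of an integral on the left. -/
lemma integral_mul_left_Hq {α : Type*} [MeasurableSpace α] {μ : Measure α}
    {f : α → Hq} (hf : Integrable f μ) (c : Hq) :
    ∫ a, c * f a ∂μ = c * ∫ a, f a ∂μ :=
  by simpa using ((ContinuousLinearMap.mul ℝ Hq c).integral_comp_comm hf)

lemma norm_qexp_le (u : Hq) (hu : ‖u‖ ≤ 1) (θ : ℝ) : ‖qexp u θ‖ ≤ 2 := by
  calc ‖qexp u θ‖ ≤ ‖(Real.cos θ) • (1:Hq)‖ + ‖(Real.sin θ) • u‖ := norm_add_le _ _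
    _ ≤ |Real.cos θ| * 1 + |Real.sin θ| * 1 := by
        rw [norm_smul, norm_smul, Real.norm_eq_abs, Real.norm_eq_abs, norm_one]
        gcongr
        all_goals first | exact abs_nonneg _ | exact hu
    _ ≤ 1 * 1 + 1 * 1 := by
        gcongr
        · exact Real.abs_cos_le_one θ
        · exact Real.abs_sin_le_one θ
    _ = 2 := by norm_num

lemma integrable_E_qexp (heps : 0 < eps) (u : Hq) (hu : ‖u‖ ≤ 1) (t : ℝ) :
    Integrable (fun ω : ℝ => Real.exp (-(eps * |ω|)) • qexp u (ω * t)) := by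
  have hcont : Continuous (fun ω : ℝ => Real.exp (-(eps * |ω|)) • qexp u (ω * t)) :=
    (by fun_prop : Continuous fun ω : ℝ => Real.exp (-(eps * |ω|))).smul
      ((continuous_qexp u).comp (by fun_prop))
  refine ((integrable_E heps).mul_const 2).mono' hcont.aestronglyMeasurable ?_
  filter_upwards with ω
  rw [norm_smul, Real.norm_eq_abs, Real.abs_exp]
  exact mul_le_mul_of_nonneg_left (norm_qexp_le u hu _) (Real.exp_nonneg _)

lemma int_E_qexp (heps : 0 < eps) (u : Hq) (t : ℝ) :
    ∫ ω : ℝ, Real.exp (-(eps * |ω|)) • qexp u (ω * t)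
      = (2 * eps / (eps ^ 2 + t ^ 2)) • (1 : Hq) := by
  have h : ∀ ω : ℝ, Real.exp (-(eps * |ω|)) • qexp u (ω * t)
      = (Real.exp (-(eps * |ω|)) * Real.cos (ω * t)) • (1 : Hq)
        + (Real.exp (-(eps * |ω|)) * Real.sin (ω * t)) • u := by
    intro ω
    simp only [qexp, smul_add, smul_smul]
  simp_rw [h]
  rw [integral_add ((integrable_E_cos heps t).smul_const _) ((integrable_E_sin heps t).smul_const _),
    integral_smul_const, integral_smul_const, int_E_cos heps t, int_E_sin heps t, zero_smul,
    add_zero]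

lemma norm_qi : ‖qi‖ = 1 := by
  have h : Quaternion.normSq qi = 1 := by simp [Quaternion.normSq_def', show qi.re = 0 from rfl, show qi.imI = 1 from rfl, show qi.imJ = 0 from rfl, show qi.imK = 0 from rfl]
  have := Quaternion.normSq_eq_norm_mul_self qi
  nlinarith [norm_nonneg qi]

lemma norm_qj : ‖qj‖ = 1 := by
  have h : Quaternion.normSq qj = 1 := by simp [Quaternion.normSq_def', show qj.re = 0 from rfl, show qj.imI = 0 from rfl, show qj.imJ = 1 from rfl, show qj.imK = 0 from rfl]
  have := Quaternion.normSq_eq_norm_mul_self qj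
  nlinarith [norm_nonneg qj]

end helpers


lemma inner_int {eps : ℝ} (heps : 0 < eps) (c : Hq) (x y : ℝ × ℝ) :
    ∫ ω : ℝ × ℝ, (Real.exp (-(eps * |ω.1|)) * Real.exp (-(eps * |ω.2|))) •
        (c * qexp qi (-(ω.1 * y.1)) * qexp qj (-(ω.2 * y.2)) *
          qexp qj (ω.2 * x.2) * qexp qi (ω.1 * x.1))
      = ((2 * eps / (eps ^ 2 + (x.1 - y.1) ^ 2)) *
          (2 * eps / (eps ^ 2 + (x.2 - y.2) ^ 2))) • c := by
  have hGrw : ∀ ω : ℝ × ℝ,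
      (Real.exp (-(eps * |ω.1|)) * Real.exp (-(eps * |ω.2|))) •
        (c * qexp qi (-(ω.1 * y.1)) * qexp qj (-(ω.2 * y.2)) *
          qexp qj (ω.2 * x.2) * qexp qi (ω.1 * x.1))
      = Real.exp (-(eps * |ω.1|)) • ((c * qexp qi (-(ω.1 * y.1))) *
          ((Real.exp (-(eps * |ω.2|)) • qexp qj (ω.2 * (x.2 - y.2))) *
            qexp qi (ω.1 * x.1))) := by
    intro ω
    rw [mul_assoc (c * qexp qi (-(ω.1 * y.1))) (qexp qj (-(ω.2 * y.2))) (qexp qj (ω.2 * x.2)),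
      qexp_mul qj qj_mul_qj, show -(ω.2 * y.2) + ω.2 * x.2 = ω.2 * (x.2 - y.2) by ring]
    simp only [smul_mul_assoc, mul_smul_comm, smul_smul, mul_assoc]
  simp_rw [hGrw]
  have hInt2 : Integrable (fun ω : ℝ × ℝ =>
      Real.exp (-(eps * |ω.1|)) • ((c * qexp qi (-(ω.1 * y.1))) *
        ((Real.exp (-(eps * |ω.2|)) • qexp qj (ω.2 * (x.2 - y.2))) *
          qexp qi (ω.1 * x.1)))) ((volume : Measure ℝ).prod volume) := by
    have hbd : Integrable (fun ω : ℝ × ℝ =>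
        (Real.exp (-(eps * |ω.1|)) * Real.exp (-(eps * |ω.2|))) * (‖c‖ * 2))
        ((volume : Measure ℝ).prod volume) :=
      ((integrable_E heps).mul_prod (integrable_E heps)).mul_const _
    refine hbd.mono' ?_ ?_
    · apply Continuous.aestronglyMeasurable
      fun_prop
    · filter_upwards with ω
      simp only [norm_smul, norm_mul, Real.norm_eq_abs, Real.abs_exp, norm_qexp_qi, mul_one]
      calc Real.exp (-(eps * |ω.1|)) * (‖c‖ * (Real.exp (-(eps * |ω.2|)) * ‖qexp qj (ω.2 * (x.2 - y.2))‖))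
          ≤ Real.exp (-(eps * |ω.1|)) * (‖c‖ * (Real.exp (-(eps * |ω.2|)) * 2)) := by
            gcongr
            exact norm_qexp_le qj (le_of_eq norm_qj) _
        _ = Real.exp (-(eps * |ω.1|)) * Real.exp (-(eps * |ω.2|)) * (‖c‖ * 2) := by ring
  rw [show (volume : Measure (ℝ × ℝ)) = (volume : Measure ℝ).prod volume from MeasureTheory.Measure.volume_eq_prod ℝ ℝ,
    integral_prod _ hInt2]
  have hJ : Integrable (fun ω₂ : ℝ => Real.exp (-(eps * |ω₂|)) • qexp qj (ω₂ * (x.2 - y.2))) :=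
    integrable_E_qexp heps qj (le_of_eq norm_qj) _
  have hinner1 : ∀ ω₁ : ℝ,
      (∫ ω₂ : ℝ, Real.exp (-(eps * |ω₁|)) • ((c * qexp qi (-(ω₁ * y.1))) *
        ((Real.exp (-(eps * |ω₂|)) • qexp qj (ω₂ * (x.2 - y.2))) * qexp qi (ω₁ * x.1))))
      = (2 * eps / (eps ^ 2 + (x.2 - y.2) ^ 2)) •
          (Real.exp (-(eps * |ω₁|)) • (c * qexp qi (ω₁ * (x.1 - y.1)))) := by
    intro ω₁
    have hJD : Integrable (fun ω₂ : ℝ =>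
        (Real.exp (-(eps * |ω₂|)) • qexp qj (ω₂ * (x.2 - y.2))) * qexp qi (ω₁ * x.1)) := by
      simpa using (((ContinuousLinearMap.mul ℝ Hq).flip (qexp qi (ω₁ * x.1))).integrable_comp hJ)
    rw [integral_smul, integral_mul_left_Hq hJD, integral_mul_right_Hq hJ, int_E_qexp heps qj _,
      smul_mul_assoc, one_mul, mul_smul_comm, mul_assoc, qexp_mul qi qi_mul_qi,
      show -(ω₁ * y.1) + ω₁ * x.1 = ω₁ * (x.1 - y.1) by ring, smul_comm]
  simp_rw [hinner1]
  rw [integral_smul]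
  have hK : Integrable (fun ω₁ : ℝ => Real.exp (-(eps * |ω₁|)) • qexp qi (ω₁ * (x.1 - y.1))) :=
    integrable_E_qexp heps qi (le_of_eq norm_qi) _
  simp_rw [← mul_smul_comm]
  rw [integral_mul_left_Hq hK, int_E_qexp heps qi _, mul_smul_comm, mul_one, smul_smul, mul_comm]

lemma integrable_mul_bd (f : ℝ × ℝ → Hq) (hf : Integrable f) (g : ℝ × ℝ → Hq)
    (hg : Continuous g) (hgn : ∀ y, ‖g y‖ ≤ 1) :
    Integrable (fun y => f y * g y) := by
  refine hf.norm.mono' (hf.1.mul hg.aestronglyMeasurable) ?_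
  filter_upwards with y
  rw [norm_mul]
  exact mul_le_of_le_one_right (norm_nonneg _) (hgn y)

theorem stmt0 (f : ℝ × ℝ → Hq) (hf : Integrable f) (eps : ℝ) (heps : 0 < eps) (x : ℝ × ℝ) :
    (∫ y : ℝ × ℝ, poisson eps (x.1 - y.1, x.2 - y.2) • f y) =
      (1 / (2 * Real.pi)) •
        ∫ ω : ℝ × ℝ, Pker (eps * ω.1) (eps * ω.2) •
          (Fr f ω * qexp qj (ω.2 * x.2) * qexp qi (ω.1 * x.1)) := by
  have hPk : ∀ a b : ℝ, Pker (eps * a) (eps * b)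
      = Real.exp (-(eps * |a|)) * Real.exp (-(eps * |b|)) := by
    intro a b
    rw [Pker, abs_mul, abs_mul, abs_of_pos heps, ← Real.exp_add]
    ring_nf
  -- the big integrand
  set G : ℝ × ℝ → ℝ × ℝ → Hq := fun ω y =>
    (Real.exp (-(eps * |ω.1|)) * Real.exp (-(eps * |ω.2|))) •
      (f y * qexp qi (-(ω.1 * y.1)) * qexp qj (-(ω.2 * y.2)) *
        qexp qj (ω.2 * x.2) * qexp qi (ω.1 * x.1)) with hGdef
  -- step 1 : rewrite the ω-integrand on the RHS
  have hstep1 : ∀ ω : ℝ × ℝ,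
      Pker (eps * ω.1) (eps * ω.2) • (Fr f ω * qexp qj (ω.2 * x.2) * qexp qi (ω.1 * x.1))
      = (1 / (2 * Real.pi)) • ∫ y : ℝ × ℝ, G ω y := by
    intro ω
    have hA : Integrable (fun y : ℝ × ℝ =>
        f y * qexp qi (-(ω.1 * y.1)) * qexp qj (-(ω.2 * y.2))) := by
      have := integrable_mul_bd f hf
        (fun y => qexp qi (-(ω.1 * y.1)) * qexp qj (-(ω.2 * y.2)))
        (by fun_prop) (fun y => by simp [norm_mul, norm_qexp_qi, norm_qexp_qj])
      simpa [mul_assoc] using this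
    have hB : Integrable (fun y : ℝ × ℝ =>
        f y * qexp qi (-(ω.1 * y.1)) * qexp qj (-(ω.2 * y.2)) * qexp qj (ω.2 * x.2)) := by
      have := integrable_mul_bd f hf
        (fun y => qexp qi (-(ω.1 * y.1)) * (qexp qj (-(ω.2 * y.2)) * qexp qj (ω.2 * x.2)))
        (by fun_prop) (fun y => by simp [norm_mul, norm_qexp_qi, norm_qexp_qj])
      simpa [mul_assoc] using this
    rw [Fr, smul_mul_assoc, smul_mul_assoc, ← integral_mul_right_Hq hA,
      ← integral_mul_right_Hq hB, smul_comm, ← integral_smul]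
    congr 1
    refine integral_congr_ae (Filter.Eventually.of_forall fun y => ?_)
    rw [hGdef, hPk]
  rw [show (∫ ω : ℝ × ℝ, Pker (eps * ω.1) (eps * ω.2) •
        (Fr f ω * qexp qj (ω.2 * x.2) * qexp qi (ω.1 * x.1)))
      = ∫ ω : ℝ × ℝ, (1 / (2 * Real.pi)) • ∫ y : ℝ × ℝ, G ω y from
    integral_congr_ae (Filter.Eventually.of_forall hstep1), integral_smul]
  -- step 2 : Fubini
  have hGint : Integrable (fun z : (ℝ × ℝ) × (ℝ × ℝ) => G z.1 z.2)
      ((volume : Measure (ℝ × ℝ)).prod volume) := by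
    have hEE : Integrable (fun ω : ℝ × ℝ =>
        Real.exp (-(eps * |ω.1|)) * Real.exp (-(eps * |ω.2|))) := by
      rw [MeasureTheory.Measure.volume_eq_prod]
      exact (integrable_E heps).mul_prod (integrable_E heps)
    have hbd : Integrable (fun z : (ℝ × ℝ) × (ℝ × ℝ) =>
        (Real.exp (-(eps * |z.1.1|)) * Real.exp (-(eps * |z.1.2|))) * ‖f z.2‖)
        ((volume : Measure (ℝ × ℝ)).prod volume) := hEE.mul_prod hf.norm
    refine hbd.mono' ?_ ?_
    · simp only [hGdef]
      apply AEStronglyMeasurable.fun_smul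
      · apply Continuous.aestronglyMeasurable; fun_prop
      · apply AEStronglyMeasurable.mul
        · apply AEStronglyMeasurable.mul
          · apply AEStronglyMeasurable.mul
            · exact (hf.1.comp_snd).mul (by apply Continuous.aestronglyMeasurable; fun_prop)
            · apply Continuous.aestronglyMeasurable; fun_prop
          · apply Continuous.aestronglyMeasurable; fun_prop
        · apply Continuous.aestronglyMeasurable; fun_prop
    · filter_upwards with z
      rw [hGdef]
      simp only [norm_smul, norm_mul, Real.norm_eq_abs, Real.abs_exp, norm_qexp_qi,
        norm_qexp_qj, mul_one]
      exact le_of_eq rfl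
  have hswap := MeasureTheory.integral_integral_swap (f := G) hGint
  rw [hswap]
  -- step 3 : inner integral
  have hInner : ∀ y : ℝ × ℝ, (∫ ω : ℝ × ℝ, G ω y)
      = ((2 * eps / (eps ^ 2 + (x.1 - y.1) ^ 2)) *
          (2 * eps / (eps ^ 2 + (x.2 - y.2) ^ 2))) • f y := by
    intro y
    rw [hGdef]
    exact inner_int heps (f y) x y
  simp_rw [hInner]
  rw [← integral_smul, ← integral_smul]
  refine integral_congr_ae (Filter.Eventually.of_forall fun y => ?_)
  simp only [smul_smul]
  congr 1
  rw [poisson]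
  have h1 : (0:ℝ) < eps ^ 2 + (x.1 - y.1) ^ 2 := by positivity
  have h2 : (0:ℝ) < eps ^ 2 + (x.2 - y.2) ^ 2 := by positivity
  have hpi : Real.pi ≠ 0 := Real.pi_ne_zero
  field_simp
end
end

section
/- If f, g ∈ L²(ℝ²,ℍ), then Sc(⟨βf, βg⟩) = Sc(⟨f, g⟩) and Sc(i·⟨βf, βg⟩) = Sc(i·⟨f, g⟩). In particular ‖βf‖₂ = ‖f‖₂. -/
open MeasureTheory Real ENNReal

noncomputable section

/-- The transform beta. -/
def betaT (f : ℝ × ℝ → Hq) (x : ℝ × ℝ) : Hq :=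
  ⟨(f x).re, (f x).imI, (f (-x.1, x.2)).imJ, (f (-x.1, x.2)).imK⟩

namespace Stmt10Aux

/-- The flip of the first coordinate as a measurable equivalence. -/
def σe : (ℝ × ℝ) ≃ᵐ (ℝ × ℝ) := (MeasurableEquiv.neg ℝ).prodCongr (MeasurableEquiv.refl ℝ)

lemma σe_apply (x : ℝ × ℝ) : σe x = (-x.1, x.2) := rfl

lemma hσ : MeasurePreserving (⇑σe) (volume : Measure (ℝ × ℝ)) volume := by
  rw [MeasureTheory.Measure.volume_eq_prod]
  exact (Measure.measurePreserving_neg volume).prod (MeasurePreserving.id volume)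

lemma re_mul_star (a b : Hq) : (a * star b).re =
    a.re*b.re + a.imI*b.imI + a.imJ*b.imJ + a.imK*b.imK := by
  simp [Quaternion.re_mul]

lemma imI_mul_star (a b : Hq) : (a * star b).imI =
    a.imI*b.re - a.re*b.imI + a.imK*b.imJ - a.imJ*b.imK := by
  simp [Quaternion.imI_mul]; ring

lemma abs_re_le (q : Hq) : |q.re| ≤ ‖q‖ := by
  have h := Quaternion.normSq_eq_norm_mul_self q
  rw [Quaternion.normSq_def'] at h
  rw [abs_le]
  constructor <;> nlinarith [norm_nonneg q, sq_nonneg q.imI, sq_nonneg q.imJ, sq_nonneg q.imK]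

lemma abs_imI_le (q : Hq) : |q.imI| ≤ ‖q‖ := by
  have h := Quaternion.normSq_eq_norm_mul_self q
  rw [Quaternion.normSq_def'] at h
  rw [abs_le]
  constructor <;> nlinarith [norm_nonneg q, sq_nonneg q.re, sq_nonneg q.imJ, sq_nonneg q.imK]

lemma abs_imJ_le (q : Hq) : |q.imJ| ≤ ‖q‖ := by
  have h := Quaternion.normSq_eq_norm_mul_self q
  rw [Quaternion.normSq_def'] at h
  rw [abs_le]
  constructor <;> nlinarith [norm_nonneg q, sq_nonneg q.re, sq_nonneg q.imI, sq_nonneg q.imK]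

lemma abs_imK_le (q : Hq) : |q.imK| ≤ ‖q‖ := by
  have h := Quaternion.normSq_eq_norm_mul_self q
  rw [Quaternion.normSq_def'] at h
  rw [abs_le]
  constructor <;> nlinarith [norm_nonneg q, sq_nonneg q.re, sq_nonneg q.imI, sq_nonneg q.imJ]

variable {f g : ℝ × ℝ → Hq}

lemma memLp_comp (hf : MemLp f 2 volume) {c : Hq → ℝ} (hc : Continuous c)
    (hle : ∀ q, |c q| ≤ ‖q‖) : MemLp (fun x => c (f x)) 2 volume :=
  hf.norm.of_le (hc.comp_aestronglyMeasurable hf.1)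
    (Filter.Eventually.of_forall fun x => by
      simpa [Real.norm_eq_abs, abs_of_nonneg (norm_nonneg (f x))] using hle (f x))

lemma integrable_mul_L2 {φ ψ : ℝ × ℝ → ℝ} (hφ : MemLp φ 2 volume) (hψ : MemLp ψ 2 volume) :
    Integrable (fun x => φ x * ψ x) volume := by
  have h : MemLp (φ • ψ) 1 volume :=
    hψ.smul hφ
  exact memLp_one_iff_integrable.mp h

/-- `re` as a continuous linear map. -/
def reCLM : Hq →L[ℝ] ℝ :=
  LinearMap.mkContinuous (QuaternionAlgebra.reₗ _ _ _) 1
    (fun q => by simp only [one_mul, Real.norm_eq_abs]; exact abs_re_le q)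

/-- `imI` as a continuous linear map. -/
def imICLM : Hq →L[ℝ] ℝ :=
  LinearMap.mkContinuous (QuaternionAlgebra.imIₗ _ _ _) 1
    (fun q => by simp only [one_mul, Real.norm_eq_abs]; exact abs_imI_le q)

lemma memLp_smul_const {c : ℝ × ℝ → ℝ} (hc : MemLp c 2 volume) (q : Hq) :
    MemLp (fun x => c x • q) 2 volume :=
  (memLp_top_const q).smul hc

lemma betaT_eq (f : ℝ × ℝ → Hq) : betaT f = fun x =>
    (f x).re • (1 : Hq) + (f x).imI • qi + (f (σe x)).imJ • qj + (f (σe x)).imK • qk := by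
  funext x
  ext <;> simp [betaT, σe_apply, Quaternion.re_smul, Quaternion.imI_smul, Quaternion.imJ_smul, Quaternion.imK_smul, Quaternion.re_one, Quaternion.imI_one, Quaternion.imJ_one, Quaternion.imK_one] <;> simp [qi, qj, qk]

lemma memLp_betaT (hf : MemLp f 2 volume) : MemLp (betaT f) 2 volume := by
  have hfσ : MemLp (f ∘ ⇑σe) 2 volume := hf.comp_measurePreserving hσ
  rw [betaT_eq]
  exact (((memLp_smul_const (memLp_comp hf Quaternion.continuous_re abs_re_le) 1).add
    (memLp_smul_const (memLp_comp hf Quaternion.continuous_imI abs_imI_le) qi)).add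
    (memLp_smul_const (memLp_comp hfσ Quaternion.continuous_imJ abs_imJ_le) qj)).add
    (memLp_smul_const (memLp_comp hfσ Quaternion.continuous_imK abs_imK_le) qk)

lemma integrable_mul_star (hf : MemLp f 2 volume) (hg : MemLp g 2 volume) :
    Integrable (fun x => f x * star (g x)) volume := by
  have hstar : MemLp (fun x => star (g x)) 2 volume :=
    hg.of_le (continuous_star.comp_aestronglyMeasurable hg.1)
      (Filter.Eventually.of_forall fun x => by simp)
  have h : MemLp (f • fun x => star (g x)) 1 volume :=
    hstar.smul hf
  exact memLp_one_iff_integrable.mp h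

end Stmt10Aux

namespace Stmt10Aux

lemma reCLM_apply (q : Hq) : reCLM q = q.re := rfl
lemma imICLM_apply (q : Hq) : imICLM q = q.imI := rfl

lemma qi_mul_re (q : Hq) : (qi * q).re = -q.imI := by
  rw [Quaternion.re_mul]; simp [qi]

lemma coe_nnnorm_rpow_two (q : Hq) :
    (‖q‖₊ : ℝ≥0∞) ^ (2:ℝ) = ENNReal.ofReal (q.re^2 + q.imI^2 + q.imJ^2 + q.imK^2) := by
  have h := Quaternion.normSq_eq_norm_mul_self q
  rw [Quaternion.normSq_def'] at h
  rw [show (2:ℝ) = ((2:ℕ):ℝ) by norm_num, ENNReal.rpow_natCast, ← enorm_eq_nnnorm, ← ofReal_norm,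
      ← ENNReal.ofReal_pow (norm_nonneg q)]
  congr 1
  rw [pow_two]
  exact h.symm

end Stmt10Aux

open Stmt10Aux in
theorem stmt10 (f g : ℝ × ℝ → Hq) (hf : MemLp f 2 volume) (hg : MemLp g 2 volume) :
    (∫ x : ℝ × ℝ, betaT f x * star (betaT g x)).re = (∫ x : ℝ × ℝ, f x * star (g x)).re ∧
    (qi * ∫ x : ℝ × ℝ, betaT f x * star (betaT g x)).re =
      (qi * ∫ x : ℝ × ℝ, f x * star (g x)).re ∧
    eLpNorm (betaT f) 2 volume = eLpNorm f 2 volume := by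
    classical
  have hf0 := memLp_comp hf Quaternion.continuous_re abs_re_le
  have hf1 := memLp_comp hf Quaternion.continuous_imI abs_imI_le
  have hf2 := memLp_comp hf Quaternion.continuous_imJ abs_imJ_le
  have hf3 := memLp_comp hf Quaternion.continuous_imK abs_imK_le
  have hg0 := memLp_comp hg Quaternion.continuous_re abs_re_le
  have hg1 := memLp_comp hg Quaternion.continuous_imI abs_imI_le
  have hg2 := memLp_comp hg Quaternion.continuous_imJ abs_imJ_le
  have hg3 := memLp_comp hg Quaternion.continuous_imK abs_imK_le
  set A : ℝ × ℝ → ℝ := fun x => (f x).re*(g x).re + (f x).imI*(g x).imI with hA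
  set B : ℝ × ℝ → ℝ := fun x => (f x).imJ*(g x).imJ + (f x).imK*(g x).imK with hB
  set C : ℝ × ℝ → ℝ := fun x => (f x).imI*(g x).re - (f x).re*(g x).imI with hC
  set D : ℝ × ℝ → ℝ := fun x => (f x).imK*(g x).imJ - (f x).imJ*(g x).imK with hD
  have hAi : Integrable A volume := (integrable_mul_L2 hf0 hg0).add (integrable_mul_L2 hf1 hg1)
  have hBi : Integrable B volume := (integrable_mul_L2 hf2 hg2).add (integrable_mul_L2 hf3 hg3)
  have hCi : Integrable C volume := (integrable_mul_L2 hf1 hg0).sub (integrable_mul_L2 hf0 hg1)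
  have hDi : Integrable D volume := (integrable_mul_L2 hf3 hg2).sub (integrable_mul_L2 hf2 hg3)
  have hBσ : Integrable (fun x => B (σe x)) volume :=
    memLp_one_iff_integrable.mp ((memLp_one_iff_integrable.mpr hBi).comp_measurePreserving hσ)
  have hDσ : Integrable (fun x => D (σe x)) volume :=
    memLp_one_iff_integrable.mp ((memLp_one_iff_integrable.mpr hDi).comp_measurePreserving hσ)
  have hF : Integrable (fun x => betaT f x * star (betaT g x)) volume :=
    integrable_mul_star (memLp_betaT hf) (memLp_betaT hg)
  have hG : Integrable (fun x => f x * star (g x)) volume := integrable_mul_star hf hg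
  have hptre : ∀ x, (betaT f x * star (betaT g x)).re = A x + B (σe x) := fun x => by
    rw [re_mul_star]; simp [betaT, σe_apply, hA, hB]; ring
  have hptre' : ∀ x, (f x * star (g x)).re = A x + B x := fun x => by
    rw [re_mul_star]; simp [hA, hB]; ring
  have hptimI : ∀ x, (betaT f x * star (betaT g x)).imI = C x + D (σe x) := fun x => by
    rw [imI_mul_star]; simp [betaT, σe_apply, hC, hD]; ring
  have hptimI' : ∀ x, (f x * star (g x)).imI = C x + D x := fun x => by
    rw [imI_mul_star]; simp [hC, hD]; ring
  have keyre : (∫ x : ℝ × ℝ, betaT f x * star (betaT g x)).re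
      = (∫ x : ℝ × ℝ, f x * star (g x)).re := by
    calc (∫ x : ℝ × ℝ, betaT f x * star (betaT g x)).re
        = reCLM (∫ x : ℝ × ℝ, betaT f x * star (betaT g x)) := (reCLM_apply _).symm
      _ = ∫ x : ℝ × ℝ, reCLM (betaT f x * star (betaT g x)) := (reCLM.integral_comp_comm hF).symm
      _ = ∫ x : ℝ × ℝ, (A x + B (σe x)) := by
          refine integral_congr_ae (Filter.Eventually.of_forall fun x => ?_)
          simp only [reCLM_apply, hptre]
      _ = (∫ x : ℝ × ℝ, A x) + ∫ x : ℝ × ℝ, B (σe x) := integral_add hAi hBσ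
      _ = (∫ x : ℝ × ℝ, A x) + ∫ x : ℝ × ℝ, B x := by rw [hσ.integral_comp' B]
      _ = ∫ x : ℝ × ℝ, (A x + B x) := (integral_add hAi hBi).symm
      _ = ∫ x : ℝ × ℝ, reCLM (f x * star (g x)) := by
          refine integral_congr_ae (Filter.Eventually.of_forall fun x => ?_)
          simp only [reCLM_apply, hptre']
      _ = reCLM (∫ x : ℝ × ℝ, f x * star (g x)) := reCLM.integral_comp_comm hG
      _ = (∫ x : ℝ × ℝ, f x * star (g x)).re := reCLM_apply _
  have keyimI : (∫ x : ℝ × ℝ, betaT f x * star (betaT g x)).imI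
      = (∫ x : ℝ × ℝ, f x * star (g x)).imI := by
    calc (∫ x : ℝ × ℝ, betaT f x * star (betaT g x)).imI
        = imICLM (∫ x : ℝ × ℝ, betaT f x * star (betaT g x)) := (imICLM_apply _).symm
      _ = ∫ x : ℝ × ℝ, imICLM (betaT f x * star (betaT g x)) := (imICLM.integral_comp_comm hF).symm
      _ = ∫ x : ℝ × ℝ, (C x + D (σe x)) := by
          refine integral_congr_ae (Filter.Eventually.of_forall fun x => ?_)
          simp only [imICLM_apply, hptimI]
      _ = (∫ x : ℝ × ℝ, C x) + ∫ x : ℝ × ℝ, D (σe x) := integral_add hCi hDσ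
      _ = (∫ x : ℝ × ℝ, C x) + ∫ x : ℝ × ℝ, D x := by rw [hσ.integral_comp' D]
      _ = ∫ x : ℝ × ℝ, (C x + D x) := (integral_add hCi hDi).symm
      _ = ∫ x : ℝ × ℝ, imICLM (f x * star (g x)) := by
          refine integral_congr_ae (Filter.Eventually.of_forall fun x => ?_)
          simp only [imICLM_apply, hptimI']
      _ = imICLM (∫ x : ℝ × ℝ, f x * star (g x)) := imICLM.integral_comp_comm hG
      _ = (∫ x : ℝ × ℝ, f x * star (g x)).imI := imICLM_apply _
  refine ⟨keyre, ?_, ?_⟩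
  · rw [qi_mul_re, qi_mul_re, keyimI]
  · rw [eLpNorm_eq_lintegral_rpow_enorm_toReal (by norm_num) (by norm_num),
      eLpNorm_eq_lintegral_rpow_enorm_toReal (by norm_num) (by norm_num)]
    congr 1
    simp only [ENNReal.toReal_ofNat]
    set A' : ℝ × ℝ → ℝ := fun x => (f x).re^2 + (f x).imI^2 with hA'
    set B' : ℝ × ℝ → ℝ := fun x => (f x).imJ^2 + (f x).imK^2 with hB'
    have hA'm : AEMeasurable (fun x => ENNReal.ofReal (A' x)) volume := by
      refine AEMeasurable.ennreal_ofReal ?_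
      exact (((Quaternion.continuous_re.comp_aestronglyMeasurable hf.1).aemeasurable.pow_const 2).add
        ((Quaternion.continuous_imI.comp_aestronglyMeasurable hf.1).aemeasurable.pow_const 2))
    calc ∫⁻ x : ℝ × ℝ, (‖betaT f x‖₊ : ℝ≥0∞) ^ (2:ℝ)
        = ∫⁻ x : ℝ × ℝ, (ENNReal.ofReal (A' x) + ENNReal.ofReal (B' (σe x))) := by
          refine lintegral_congr fun x => ?_
          rw [coe_nnnorm_rpow_two, ← ENNReal.ofReal_add (by simp [hA']; positivity) (by simp [hB']; positivity)]
          congr 1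
          simp only [betaT, σe_apply, hA', hB']
          ring
      _ = (∫⁻ x : ℝ × ℝ, ENNReal.ofReal (A' x)) + ∫⁻ x : ℝ × ℝ, ENNReal.ofReal (B' (σe x)) :=
          lintegral_add_left' hA'm _
      _ = (∫⁻ x : ℝ × ℝ, ENNReal.ofReal (A' x)) + ∫⁻ x : ℝ × ℝ, ENNReal.ofReal (B' x) := by
          rw [hσ.lintegral_comp_emb σe.measurableEmbedding (fun x => ENNReal.ofReal (B' x))]
      _ = ∫⁻ x : ℝ × ℝ, (ENNReal.ofReal (A' x) + ENNReal.ofReal (B' x)) :=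
          (lintegral_add_left' hA'm _).symm
      _ = ∫⁻ x : ℝ × ℝ, (‖f x‖₊ : ℝ≥0∞) ^ (2:ℝ) := by
          refine lintegral_congr fun x => ?_
          rw [coe_nnnorm_rpow_two (f x), ← ENNReal.ofReal_add (by simp [hA']; positivity) (by simp [hB']; positivity)]
          congr 1
          simp only [hA', hB']
          ring
end
end
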